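/- Let G = (V,E,w) be an asymptotically flat graph of dimension n ≥ 2 with non-negative Ricci curvature, i.e. κ(x,y) ≥ 0 for every edge {x,y} ∈ E. Then there exists a finite set W ⊆ V such that w(e) = 1 for every edge e ∈ E whose endpoints both lie outside W. -/

import Mathlib

open Filter Topology

noncomputable section

namespace PMT

/-- The `i`-th standard unit vector in `ℤⁿ`. -/
def e (n : ℕ) (i : Fin n) : Fin n → ℤ := fun j => if j = i then 1 else 0

/-- The grid graph on `ℤⁿ`: `x ∼ y` iff `‖x − y‖₁ = 1`. -/
def grid (n : ℕ) : SimpleGraph (Fin n → ℤ) where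
  Adj x y := (∑ i, |x i - y i|) = 1
  symm := by
    constructor
    intro x y h
    show (∑ i, |y i - x i|) = 1
    have h' : ∀ i ∈ Finset.univ, |y i - x i| = |x i - y i| :=
      fun i _ => abs_sub_comm _ _
    rw [Finset.sum_congr rfl h']
    exact h
  loopless := by constructor; intro x h; simp at h

/-- The graph Laplacian `Δf(x) = Σ_{y∼x} w(x,y)(f(y)−f(x))` of an integer-valued function. -/
def lap {V : Type*} (G : SimpleGraph V) (w : V → V → ℝ) (f : V → ℤ) (x : V) : ℝ :=
  ∑ᶠ y ∈ {y | G.Adj x y}, w x y * ((f y : ℝ) - (f x : ℝ))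

/-- `f : V → ℤ` is 1-Lipschitz with respect to the combinatorial graph distance. -/
def Lip1 {V : Type*} (G : SimpleGraph V) (f : V → ℤ) : Prop :=
  ∀ x y, |f x - f y| ≤ (G.dist x y : ℤ)

/-- Ollivier curvature of the pair `(x, y)`:
`κ(x,y) = inf {Δf(x) − Δf(y) | f : V → ℤ, f 1-Lipschitz, f(y) = f(x) + 1}`. -/
def kappa {V : Type*} (G : SimpleGraph V) (w : V → V → ℝ) (x y : V) : ℝ :=
  sInf {r | ∃ f : V → ℤ, Lip1 G f ∧ f y = f x + 1 ∧ r = lap G w f x - lap G w f y}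

/-- Scalar curvature `R(x) = Σ_{y∼x} κ(x,y)`. -/
def scal {V : Type*} (G : SimpleGraph V) (w : V → V → ℝ) (x : V) : ℝ :=
  ∑ᶠ y ∈ {y | G.Adj x y}, kappa G w x y

/-- A weighted grid graph `(ℤⁿ, w)`: symmetric weights, positive on edges. -/
structure GridWeight (n : ℕ) where
  w : (Fin n → ℤ) → (Fin n → ℤ) → ℝ
  symm : ∀ x y, w x y = w y x
  pos : ∀ x y, (grid n).Adj x y → 0 < w x y

/-- The quantity `Abs(x)` measuring the distortion from the standard grid graph. -/
def Absf (n : ℕ) (w : (Fin n → ℤ) → (Fin n → ℤ) → ℝ) (x : Fin n → ℤ) : ℝ :=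
  ∑ i, ∑ j, if i ≠ j then
      (|w x (x + e n i) - w (x + e n j) (x + e n j + e n i)| +
       |w x (x + e n i) - w (x - e n j) (x - e n j + e n i)| +
       |w x (x - e n i) - w (x + e n j) (x + e n j - e n i)| +
       |w x (x - e n i) - w (x - e n j) (x - e n j - e n i)|)
    else 0

/-- The `ℓ^∞` norm `‖x‖_∞` of `x ∈ ℤⁿ`, as a natural number. -/
def nInf {n : ℕ} (x : Fin n → ℤ) : ℕ := Finset.univ.sup fun i => (x i).natAbs

/-- The cube `Q_r = {y ∈ ℤⁿ : ‖y‖∞ ≤ r}` as a finset. -/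
def Qr (n r : ℕ) : Finset (Fin n → ℤ) := Finset.Icc (fun _ => -(r : ℤ)) (fun _ => (r : ℤ))

/-- `Σ_{e ∈ E_r} w(e)`: the sum of weights of edges with exactly one endpoint in `Q_r`
(each such edge is counted once, via its endpoint inside `Q_r`). -/
def ErSum (n : ℕ) (w : (Fin n → ℤ) → (Fin n → ℤ) → ℝ) (r : ℕ) : ℝ :=
  ∑ x ∈ Qr n r, ∑ i,
    ((if x + e n i ∉ Qr n r then w x (x + e n i) else 0) +
     (if x - e n i ∉ Qr n r then w x (x - e n i) else 0))

/-- `Σ_{τ ∈ Ẽ_r} w(τ)`: the sum of weights of edges joining the sphere `S_{r+1}` to the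
sphere `S_{r+2}` (each such edge is counted once, via its endpoint in `S_{r+1}`). -/
def TErSum (n : ℕ) (w : (Fin n → ℤ) → (Fin n → ℤ) → ℝ) (r : ℕ) : ℝ :=
  ∑ x ∈ Qr n (r + 1), if nInf x = r + 1 then
      (∑ i, ((if nInf (x + e n i) = r + 2 then w x (x + e n i) else 0) +
             (if nInf (x - e n i) = r + 2 then w x (x - e n i) else 0)))
    else 0

/-- The weighted grid graph `(ℤⁿ, w)` is asymptotically flat: there is `p > n` with
`w = 1 + o(1)`, `Abs(x) = O(‖x‖∞^{−p})` and `|R(x)| = O(‖x‖∞^{−p})` as `‖x‖∞ → ∞`. -/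
def AsympFlatGrid (n : ℕ) (W : GridWeight n) : Prop :=
  ∃ p : ℝ, (n : ℝ) < p ∧
    (∀ ε : ℝ, 0 < ε → ∃ M : ℕ, ∀ x y, (grid n).Adj x y → M ≤ nInf x → |W.w x y - 1| ≤ ε) ∧
    (∃ C : ℝ, ∃ M : ℕ, 0 < M ∧ ∀ x, M ≤ nInf x → Absf n W.w x ≤ C * (nInf x : ℝ) ^ (-p)) ∧
    (∃ C : ℝ, ∃ M : ℕ, 0 < M ∧ ∀ x, M ≤ nInf x → |scal (grid n) W.w x| ≤ C * (nInf x : ℝ) ^ (-p))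


/-- A weighted graph: simple, undirected, connected, locally finite,
with symmetric positive edge weights. -/
structure WGraph (V : Type) where
  G : SimpleGraph V
  w : V → V → ℝ
  symm : ∀ x y, w x y = w y x
  pos : ∀ x y, G.Adj x y → 0 < w x y
  locFin : ∀ x : V, {y | G.Adj x y}.Finite
  conn : G.Connected

/-- The weighted graph `W` is asymptotically flat with asymptotic model the
asymptotically flat weighted grid graph `Wg` on `ℤⁿ`: outside a finite set `K`, `W` is
weighted isomorphic (via `Φ`) to the complement of the cube `Q_r` in `(ℤⁿ, Wg.w)`, and
there are no edges between `K` and `Φ⁻¹(ℤⁿ ∖ Q_{r+1})`. -/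
def AsympFlatPair {V : Type} (n : ℕ) (W : WGraph V) (Wg : GridWeight n) : Prop :=
  AsympFlatGrid n Wg ∧
  ∃ (K : Set V) (r : ℕ) (Φ : V → (Fin n → ℤ)),
    K.Finite ∧ 0 < r ∧
    Set.BijOn Φ Kᶜ {x | r < nInf x} ∧
    (∀ u v, u ∉ K → v ∉ K → (W.G.Adj u v ↔ (grid n).Adj (Φ u) (Φ v))) ∧
    (∀ u v, u ∉ K → v ∉ K → W.G.Adj u v → W.w u v = Wg.w (Φ u) (Φ v)) ∧
    (∀ u v, u ∈ K → v ∉ K → r + 1 < nInf (Φ v) → ¬ W.G.Adj u v)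



lemma e_self (n : ℕ) (i : Fin n) : e n i i = 1 := by simp [e]

lemma e_ne (n : ℕ) {i j : Fin n} (h : j ≠ i) : e n i j = 0 := by simp [e, h]

lemma adj_plus (n : ℕ) (x : Fin n → ℤ) (l : Fin n) : (grid n).Adj x (x + e n l) := by
  show (∑ i, |x i - (x i + e n l i)|) = 1
  have : ∀ i ∈ Finset.univ, |x i - (x i + e n l i)| = if i = l then 1 else 0 := by
    intro i _
    by_cases h : i = l <;> simp [e, h]
  rw [Finset.sum_congr rfl this]
  simp

lemma adj_minus (n : ℕ) (x : Fin n → ℤ) (l : Fin n) : (grid n).Adj x (x - e n l) := by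
  show (∑ i, |x i - (x i - e n l i)|) = 1
  have : ∀ i ∈ Finset.univ, |x i - (x i - e n l i)| = if i = l then 1 else 0 := by
    intro i _
    by_cases h : i = l <;> simp [e, h]
  rw [Finset.sum_congr rfl this]
  simp

lemma adj_char {n : ℕ} {x y : Fin n → ℤ} (h : (grid n).Adj x y) :
    ∃ l, y = x + e n l ∨ y = x - e n l := by
  have hsum : (∑ i, |x i - y i|) = 1 := h
  have hex : ∃ l, |x l - y l| ≠ 0 := by
    by_contra hc
    push_neg at hc
    have h0 : (∑ i, |x i - y i|) = 0 := Finset.sum_eq_zero fun i _ => hc i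
    rw [h0] at hsum; exact absurd hsum (by norm_num)
  obtain ⟨l, hl⟩ := hex
  have hl1 : 1 ≤ |x l - y l| := by
    have := abs_nonneg (x l - y l); omega
  have hsplit := Finset.add_sum_erase Finset.univ (fun i => |x i - y i|) (Finset.mem_univ l)
  have hrest0 : ∀ i ∈ Finset.univ.erase l, |x i - y i| = 0 := by
    have hle : ∑ i ∈ Finset.univ.erase l, |x i - y i| ≤ 0 := by
      linarith [hsplit.symm ▸ hsum]
    intro i hi
    have h1 := Finset.single_le_sum (f := fun i => |x i - y i|)
      (fun i _ => abs_nonneg _) hi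
    have h2 := abs_nonneg (x i - y i)
    omega
  have hleq : |x l - y l| = 1 := by
    have h0 : ∑ i ∈ Finset.univ.erase l, |x i - y i| = 0 :=
      Finset.sum_eq_zero hrest0
    rw [h0] at hsplit
    linarith [hsplit, hsum]
  rcases abs_eq (by norm_num : (0:ℤ) ≤ 1) |>.mp hleq with hc | hc
  · refine ⟨l, Or.inr ?_⟩
    funext m
    by_cases hm : m = l
    · subst hm; simp [e]; omega
    · have h3 := hrest0 m (Finset.mem_erase.mpr ⟨hm, Finset.mem_univ m⟩)
      have : x m - y m = 0 := abs_eq_zero.mp h3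
      simp [e, hm]; omega
  · refine ⟨l, Or.inl ?_⟩
    funext m
    by_cases hm : m = l
    · subst hm; simp [e]; omega
    · have h3 := hrest0 m (Finset.mem_erase.mpr ⟨hm, Finset.mem_univ m⟩)
      have : x m - y m = 0 := abs_eq_zero.mp h3
      simp [e, hm]; omega

lemma adj_coord_le {n : ℕ} {x y : Fin n → ℤ} (h : (grid n).Adj x y) (i : Fin n) :
    (x i - y i).natAbs ≤ 1 := by
  have hsum : (∑ m, |x m - y m|) = 1 := h
  have h1 := Finset.single_le_sum (f := fun m => |x m - y m|)
    (fun m _ => abs_nonneg _) (Finset.mem_univ i)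
  rw [hsum, Int.abs_eq_natAbs] at h1
  omega

lemma coord_le_nInf {n : ℕ} (x : Fin n → ℤ) (i : Fin n) : (x i).natAbs ≤ nInf x :=
  Finset.le_sup (f := fun i => (x i).natAbs) (Finset.mem_univ i)

lemma nInf_le_of_forall {n : ℕ} {x : Fin n → ℤ} {m : ℕ}
    (h : ∀ i, (x i).natAbs ≤ m) : nInf x ≤ m :=
  Finset.sup_le fun i _ => h i

lemma adj_nInf_ge {n : ℕ} {x y : Fin n → ℤ} (h : (grid n).Adj x y) :
    nInf x ≤ nInf y + 1 := by
  apply nInf_le_of_forall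
  intro i
  have h1 := adj_coord_le h i
  have h2 := coord_le_nInf y i
  omega

lemma ray_coord {n : ℕ} (x : Fin n → ℤ) (i : Fin n) (t : ℤ) (m : Fin n) :
    (x + t • e n i) m = if m = i then x m + t else x m := by
  by_cases h : m = i <;> simp [e, h, Pi.smul_apply]

lemma nInf_ray_ge {n : ℕ} (x : Fin n → ℤ) (i : Fin n) (t : ℤ) :
    (x i + t).natAbs ≤ nInf (x + t • e n i) := by
  have h := coord_le_nInf (x + t • e n i) i
  rwa [ray_coord, if_pos rfl] at h

lemma nInf_ray_other {n : ℕ} (x : Fin n → ℤ) {i m : Fin n} (t : ℤ) (h : m ≠ i) :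
    (x m).natAbs ≤ nInf (x + t • e n i) := by
  have h2 := coord_le_nInf (x + t • e n i) m
  rwa [ray_coord, if_neg h] at h2

lemma nInf_ray_mono {n : ℕ} (x : Fin n → ℤ) (i : Fin n) {t : ℤ}
    (h : 0 ≤ x i ∧ 0 ≤ t ∨ x i ≤ 0 ∧ t ≤ 0) :
    nInf x ≤ nInf (x + t • e n i) := by
  apply nInf_le_of_forall
  intro m
  by_cases hm : m = i
  · subst hm
    have h1 := nInf_ray_ge x m t
    omega
  · exact nInf_ray_other x t hm

lemma one_smul_e {n : ℕ} (x : Fin n → ℤ) (i : Fin n) : x + (1:ℤ) • e n i = x + e n i := by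
  rw [one_smul]
lemma neg_one_smul_e {n : ℕ} (x : Fin n → ℤ) (i : Fin n) :
    x + (-1:ℤ) • e n i = x - e n i := by
  rw [neg_smul, one_smul, sub_eq_add_neg]

-- distinctness
lemma plus_ne_minus {n : ℕ} (x : Fin n → ℤ) (a b : Fin n) : x + e n a ≠ x - e n b := by
  intro h
  have := congrFun h a
  simp only [Pi.add_apply, Pi.sub_apply, e] at this
  by_cases hb : a = b <;> simp [hb] at this <;> omega
lemma plus_ne_plus {n : ℕ} (x : Fin n → ℤ) {a b : Fin n} (hab : a ≠ b) :
    x + e n a ≠ x + e n b := by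
  intro h
  have := congrFun h a
  simp only [Pi.add_apply, e] at this
  simp [hab] at this
lemma minus_ne_minus {n : ℕ} (x : Fin n → ℤ) {a b : Fin n} (hab : a ≠ b) :
    x - e n a ≠ x - e n b := by
  intro h
  have := congrFun h a
  simp only [Pi.sub_apply, e] at this
  simp [hab] at this


-- Test function
def Ff {n : ℕ} (σ₁ σ₂ : ℤ) (i j : Fin n) (x₀ z : Fin n → ℤ) : ℤ :=
  σ₁ * (z i - x₀ i) + σ₂ * (z j - x₀ j)

def tf (r : ℕ) {n : ℕ} (σ₁ σ₂ : ℤ) (i j : Fin n) (x₀ z : Fin n → ℤ) : ℤ :=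
  min (min 2 (max (-2) (Ff σ₁ σ₂ i j x₀ z))) (-2 + max 0 ((nInf z : ℤ) - (r+1)))

lemma tf_low {r n : ℕ} {σ₁ σ₂ : ℤ} {i j : Fin n} {x₀ z : Fin n → ℤ}
    (h : nInf z ≤ r + 1) : tf r σ₁ σ₂ i j x₀ z = -2 := by
  unfold tf
  have h1 : (-2 + max 0 ((nInf z : ℤ) - (r+1))) = -2 := by
    have : (nInf z : ℤ) ≤ (r:ℤ) + 1 := by exact_mod_cast by omega
    omega
  rw [h1]
  have : -2 ≤ min 2 (max (-2) (Ff σ₁ σ₂ i j x₀ z)) := by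
    have := le_max_left (-2 : ℤ) (Ff σ₁ σ₂ i j x₀ z)
    omega
  omega

lemma tf_eq {r n : ℕ} {σ₁ σ₂ : ℤ} {i j : Fin n} {x₀ z : Fin n → ℤ}
    (h : r + 5 ≤ nInf z) (h1 : -2 ≤ Ff σ₁ σ₂ i j x₀ z) (h2 : Ff σ₁ σ₂ i j x₀ z ≤ 2) :
    tf r σ₁ σ₂ i j x₀ z = Ff σ₁ σ₂ i j x₀ z := by
  unfold tf
  have h3 : (2:ℤ) ≤ -2 + max 0 ((nInf z : ℤ) - (r+1)) := by
    have : (r:ℤ) + 5 ≤ (nInf z : ℤ) := by exact_mod_cast h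
    omega
  omega

lemma abs_comb_le {a b σ₁ σ₂ : ℤ} (hσ₁ : σ₁ = 1 ∨ σ₁ = -1) (hσ₂ : σ₂ = 1 ∨ σ₂ = -1)
    (h : a.natAbs + b.natAbs ≤ 1) : |σ₁ * a + σ₂ * b| ≤ 1 := by
  rw [abs_le]
  rcases hσ₁ with h1 | h1 <;> rcases hσ₂ with h2 | h2 <;> subst h1 h2 <;>
    constructor <;> omega

lemma adj_pair_le {n : ℕ} {z z' : Fin n → ℤ} (h : (grid n).Adj z z') {i j : Fin n}
    (hij : i ≠ j) : (z i - z' i).natAbs + (z j - z' j).natAbs ≤ 1 := by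
  have hsum : (∑ m, |z m - z' m|) = 1 := h
  have hsub : ({i, j} : Finset (Fin n)) ⊆ Finset.univ := Finset.subset_univ _
  have hle := Finset.sum_le_sum_of_subset_of_nonneg hsub
    (fun m _ _ => abs_nonneg (z m - z' m))
  rw [Finset.sum_pair hij, hsum] at hle
  have a1 := Int.abs_eq_natAbs (z i - z' i)
  have a2 := Int.abs_eq_natAbs (z j - z' j)
  omega

lemma Ff_edge_lip {n : ℕ} {σ₁ σ₂ : ℤ} {i j : Fin n} {x₀ : Fin n → ℤ}
    (hσ₁ : σ₁ = 1 ∨ σ₁ = -1) (hσ₂ : σ₂ = 1 ∨ σ₂ = -1) (hij : i ≠ j)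
    {z z' : Fin n → ℤ} (h : (grid n).Adj z z') :
    |Ff σ₁ σ₂ i j x₀ z - Ff σ₁ σ₂ i j x₀ z'| ≤ 1 := by
  have heq : Ff σ₁ σ₂ i j x₀ z - Ff σ₁ σ₂ i j x₀ z'
      = σ₁ * (z i - z' i) + σ₂ * (z j - z' j) := by unfold Ff; ring
  rw [heq]
  exact abs_comb_le hσ₁ hσ₂ (adj_pair_le h hij)

lemma tf_edge_lip {r n : ℕ} {σ₁ σ₂ : ℤ} {i j : Fin n} {x₀ : Fin n → ℤ}
    (hσ₁ : σ₁ = 1 ∨ σ₁ = -1) (hσ₂ : σ₂ = 1 ∨ σ₂ = -1) (hij : i ≠ j)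
    {z z' : Fin n → ℤ} (h : (grid n).Adj z z') :
    |tf r σ₁ σ₂ i j x₀ z - tf r σ₁ σ₂ i j x₀ z'| ≤ 1 := by
  have hF := Ff_edge_lip hσ₁ hσ₂ hij (x₀ := x₀) h
  have hnInf : |(nInf z : ℤ) - (nInf z' : ℤ)| ≤ 1 := by
    have h1 := adj_nInf_ge h
    have h2 := adj_nInf_ge h.symm
    rw [abs_le]
    constructor <;> [push_cast; push_cast] <;> omega
  have hA : |max (-2) (Ff σ₁ σ₂ i j x₀ z) - max (-2) (Ff σ₁ σ₂ i j x₀ z')| ≤ 1 := by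
    refine le_trans (abs_max_sub_max_le_max _ _ _ _) ?_
    rw [sup_le_iff]
    constructor
    · simp
    · exact hF
  have hB : |min 2 (max (-2) (Ff σ₁ σ₂ i j x₀ z)) - min 2 (max (-2) (Ff σ₁ σ₂ i j x₀ z'))| ≤ 1 := by
    refine le_trans (abs_min_sub_min_le_max _ _ _ _) ?_
    rw [sup_le_iff]
    constructor
    · simp
    · exact hA
  have hC : |(-2 + max 0 ((nInf z : ℤ) - (r+1))) - (-2 + max 0 ((nInf z' : ℤ) - (r+1)))| ≤ 1 := by
    have heq : (-2 + max 0 ((nInf z : ℤ) - (r+1))) - (-2 + max 0 ((nInf z' : ℤ) - (r+1)))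
        = max 0 ((nInf z : ℤ) - (r+1)) - max 0 ((nInf z' : ℤ) - (r+1)) := by ring
    rw [heq]
    refine le_trans (abs_max_sub_max_le_max _ _ _ _) ?_
    rw [sup_le_iff]
    constructor
    · simp
    · have heq2 : ((nInf z : ℤ) - (r+1)) - ((nInf z' : ℤ) - (r+1))
          = (nInf z : ℤ) - (nInf z' : ℤ) := by ring
      rw [heq2]
      exact hnInf
  unfold tf
  refine le_trans (abs_min_sub_min_le_max _ _ _ _) ?_
  rw [sup_le_iff]
  exact ⟨hB, hC⟩

lemma lap_eval {n : ℕ} (wg : (Fin n → ℤ) → (Fin n → ℤ) → ℝ) (f : (Fin n → ℤ) → ℤ)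
    (x : Fin n → ℤ) {i j : Fin n} (hij : i ≠ j) (σ₁ σ₂ : ℤ)
    (hpi : f (x + e n i) - f x = σ₁) (hmi : f (x - e n i) - f x = -σ₁)
    (hpj : f (x + e n j) - f x = σ₂) (hmj : f (x - e n j) - f x = -σ₂)
    (hother : ∀ l, l ≠ i → l ≠ j → f (x + e n l) = f x ∧ f (x - e n l) = f x) :
    lap (grid n) wg f x =
      (σ₁:ℝ) * (wg x (x + e n i) - wg x (x - e n i)) +
      (σ₂:ℝ) * (wg x (x + e n j) - wg x (x - e n j)) := by
  classical
  set φ : (Fin n → ℤ) → ℝ := fun z => wg x z * ((f z : ℝ) - (f x : ℝ)) with hφ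
  set T : Finset (Fin n → ℤ) := {x + e n i, x - e n i, x + e n j, x - e n j} with hT
  have hTadj : ∀ z ∈ T, (grid n).Adj x z := by
    intro z hz
    simp only [hT, Finset.mem_insert, Finset.mem_singleton] at hz
    rcases hz with h | h | h | h <;> subst h
    · exact adj_plus n x i
    · exact adj_minus n x i
    · exact adj_plus n x j
    · exact adj_minus n x j
  have hsupp : {z | (grid n).Adj x z} ∩ Function.support φ ⊆ ↑T := by
    rintro z ⟨hz1, hz2⟩
    obtain ⟨l, hl | hl⟩ := adj_char hz1 <;> subst hl
    · by_cases hli : l = i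
      · subst hli; simp [hT]
      · by_cases hlj : l = j
        · subst hlj; simp [hT]
        · exfalso
          apply hz2
          have := (hother l hli hlj).1
          simp [hφ, this]
    · by_cases hli : l = i
      · subst hli; simp [hT]
      · by_cases hlj : l = j
        · subst hlj; simp [hT]
        · exfalso
          apply hz2
          have := (hother l hli hlj).2
          simp [hφ, this]
  have hfin : ({z | (grid n).Adj x z} ∩ Function.support φ).Finite :=
    Set.Finite.subset T.finite_toSet hsupp
  have h1 : lap (grid n) wg f x = ∑ z ∈ hfin.toFinset, φ z := by
    unfold lap
    exact finsum_mem_eq_sum φ hfin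
  have hsub : hfin.toFinset ⊆ T := by
    intro z hz
    rw [Set.Finite.mem_toFinset] at hz
    exact hsupp hz
  have h2 : ∑ z ∈ hfin.toFinset, φ z = ∑ z ∈ T, φ z := by
    apply Finset.sum_subset hsub
    intro z hzT hz
    rw [Set.Finite.mem_toFinset] at hz
    by_contra hne
    exact hz ⟨hTadj z hzT, hne⟩
  have d1 : x + e n i ∉ ({x - e n i, x + e n j, x - e n j} : Finset (Fin n → ℤ)) := by
    simp only [Finset.mem_insert, Finset.mem_singleton]
    push_neg
    exact ⟨plus_ne_minus x i i, plus_ne_plus x hij, plus_ne_minus x i j⟩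
  have d2 : x - e n i ∉ ({x + e n j, x - e n j} : Finset (Fin n → ℤ)) := by
    simp only [Finset.mem_insert, Finset.mem_singleton]
    push_neg
    exact ⟨fun hc => plus_ne_minus x j i hc.symm, minus_ne_minus x hij⟩
  have d3 : x + e n j ∉ ({x - e n j} : Finset (Fin n → ℤ)) := by
    simp only [Finset.mem_singleton]
    exact plus_ne_minus x j j
  have h3 : ∑ z ∈ T, φ z = φ (x + e n i) + (φ (x - e n i) + (φ (x + e n j) + φ (x - e n j))) := by
    rw [hT]
    rw [Finset.sum_insert d1, Finset.sum_insert d2, Finset.sum_insert d3, Finset.sum_singleton]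
  have vpi : ((f (x + e n i) : ℝ) - (f x : ℝ)) = (σ₁ : ℝ) := by
    have := congrArg (fun t : ℤ => (t : ℝ)) hpi
    push_cast at this
    linarith
  have vmi : ((f (x - e n i) : ℝ) - (f x : ℝ)) = -(σ₁ : ℝ) := by
    have := congrArg (fun t : ℤ => (t : ℝ)) hmi
    push_cast at this ⊢
    linarith
  have vpj : ((f (x + e n j) : ℝ) - (f x : ℝ)) = (σ₂ : ℝ) := by
    have := congrArg (fun t : ℤ => (t : ℝ)) hpj
    push_cast at this
    linarith
  have vmj : ((f (x - e n j) : ℝ) - (f x : ℝ)) = -(σ₂ : ℝ) := by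
    have := congrArg (fun t : ℤ => (t : ℝ)) hmj
    push_cast at this ⊢
    linarith
  rw [h1, h2, h3]
  simp only [hφ]
  rw [vpi, vmi, vpj, vmj]
  ring

lemma lip1_of_edge {V : Type*} {G : SimpleGraph V} (hconn : G.Connected) {g : V → ℤ}
    (h : ∀ u v, G.Adj u v → |g u - g v| ≤ 1) : Lip1 G g := by
  intro u v
  obtain ⟨p, hp⟩ := (hconn u v).exists_walk_length_eq_dist
  rw [← hp]
  clear hp
  induction p with
  | nil => simp
  | cons hadj q ih =>
    rename_i a b c
    have h1 := h a b hadj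
    have h2 : |g a - g c| ≤ |g a - g b| + |g b - g c| := abs_sub_le _ _ _
    simp only [SimpleGraph.Walk.length_cons]
    push_cast
    omega

lemma lap_abs_le {V : Type} (W : WGraph V) {g : V → ℤ} (hg : Lip1 W.G g) (u : V) :
    |lap W.G W.w g u| ≤ ∑ v ∈ (W.locFin u).toFinset, W.w u v := by
  unfold lap
  rw [finsum_mem_eq_finite_toFinset_sum _ (W.locFin u)]
  refine le_trans (Finset.abs_sum_le_sum_abs _ _) (Finset.sum_le_sum ?_)
  intro v hv
  rw [Set.Finite.mem_toFinset] at hv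
  have hadj : W.G.Adj u v := hv
  have hwpos := W.pos u v hadj
  have hdist : W.G.dist u v = 1 := SimpleGraph.dist_eq_one_iff_adj.mpr hadj
  have hlip := hg v u
  rw [SimpleGraph.dist_comm] at hlip
  rw [hdist] at hlip
  have habs : |(g v : ℝ) - (g u : ℝ)| ≤ 1 := by
    have : ((|g v - g u| : ℤ) : ℝ) ≤ 1 := by exact_mod_cast hlip
    push_cast at this
    exact this
  rw [abs_mul, abs_of_pos hwpos]
  calc W.w u v * |(g v : ℝ) - (g u : ℝ)| ≤ W.w u v * 1 := by
        exact mul_le_mul_of_nonneg_left habs (le_of_lt hwpos)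
    _ = W.w u v := mul_one _

lemma kappa_bddBelow {V : Type} (W : WGraph V) (u v : V) :
    BddBelow {r | ∃ f : V → ℤ, Lip1 W.G f ∧ f v = f u + 1 ∧
      r = lap W.G W.w f u - lap W.G W.w f v} := by
  refine ⟨-(∑ z ∈ (W.locFin u).toFinset, W.w u z) - (∑ z ∈ (W.locFin v).toFinset, W.w v z), ?_⟩
  rintro ρ ⟨f, hf, _, rfl⟩
  have h1 := lap_abs_le W hf u
  have h2 := lap_abs_le W hf v
  rw [abs_le] at h1 h2
  linarith

lemma kappa_le {V : Type} (W : WGraph V) {u v : V} (f : V → ℤ) (hf : Lip1 W.G f)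
    (hstep : f v = f u + 1) :
    kappa W.G W.w u v ≤ lap W.G W.w f u - lap W.G W.w f v :=
  csInf_le (kappa_bddBelow W u v) ⟨f, hf, hstep, rfl⟩

lemma lap_transfer {n : ℕ} {V : Type} (W : WGraph V) (Wg : GridWeight n)
    (K : Set V) (r : ℕ) (Φ : V → (Fin n → ℤ))
    (hbij : Set.BijOn Φ Kᶜ {x | r < nInf x})
    (hiff : ∀ u v, u ∉ K → v ∉ K → (W.G.Adj u v ↔ (grid n).Adj (Φ u) (Φ v)))
    (hw : ∀ u v, u ∉ K → v ∉ K → W.G.Adj u v → W.w u v = Wg.w (Φ u) (Φ v))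
    (hnoe : ∀ u v, u ∈ K → v ∉ K → r + 1 < nInf (Φ v) → ¬ W.G.Adj u v)
    (f : (Fin n → ℤ) → ℤ) (g : V → ℤ) (hg : ∀ v, v ∉ K → g v = f (Φ v))
    {u : V} (hu : u ∉ K) (hnu : r + 2 ≤ nInf (Φ u)) :
    lap W.G W.w g u = lap (grid n) Wg.w f (Φ u) := by
  have hnbrK : ∀ v, W.G.Adj u v → v ∉ K := by
    intro v hv hvK
    exact hnoe v u hvK hu (by omega) hv.symm
  unfold lap
  apply finsum_mem_eq_of_bijOn Φ
  · refine ⟨?_, ?_, ?_⟩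
    · intro v hv
      exact (hiff u v hu (hnbrK v hv)).mp hv
    · intro a ha b hb hab
      exact hbij.injOn (hnbrK a ha) (hnbrK b hb) hab
    · intro z hz
      have hz' : (grid n).Adj (Φ u) z := hz
      have h1 : nInf (Φ u) ≤ nInf z + 1 := adj_nInf_ge hz'
      have h2 : z ∈ {x | r < nInf x} := by
        simp only [Set.mem_setOf_eq]
        omega
      obtain ⟨v, hvK, hΦv⟩ := hbij.surjOn h2
      refine ⟨v, ?_, hΦv⟩
      show W.G.Adj u v
      exact (hiff u v hu hvK).mpr (by rw [hΦv]; exact hz')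
  · intro v hv
    have hvK := hnbrK v hv
    rw [hw u v hu hvK hv, hg v hvK, hg u hu]

lemma Ff_self {n : ℕ} (σ₁ σ₂ : ℤ) (i j : Fin n) (x : Fin n → ℤ) :
    Ff σ₁ σ₂ i j x x = 0 := by unfold Ff; ring

lemma Ff_step_add {n : ℕ} (σ₁ σ₂ : ℤ) (i j : Fin n) (x v c : Fin n → ℤ) :
    Ff σ₁ σ₂ i j x (v + c) = Ff σ₁ σ₂ i j x v + (σ₁ * c i + σ₂ * c j) := by
  unfold Ff; simp only [Pi.add_apply]; ring

lemma Ff_step_sub {n : ℕ} (σ₁ σ₂ : ℤ) (i j : Fin n) (x v c : Fin n → ℤ) :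
    Ff σ₁ σ₂ i j x (v - c) = Ff σ₁ σ₂ i j x v - (σ₁ * c i + σ₂ * c j) := by
  unfold Ff; simp only [Pi.sub_apply]; ring

lemma comb_e {n : ℕ} (σ₁ σ₂ : ℤ) {i j : Fin n} (hij : i ≠ j) (l : Fin n) :
    σ₁ * e n l i + σ₂ * e n l j = if l = i then σ₁ else if l = j then σ₂ else 0 := by
  by_cases hli : l = i
  · subst hli
    rw [e_self, e_ne n (Ne.symm hij)]
    simp [hij]
  · by_cases hlj : l = j
    · subst hlj
      rw [e_self, e_ne n hij]
      simp [hli]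
    · rw [e_ne n (fun hc => hli hc.symm), e_ne n (fun hc => hlj hc.symm)]
      simp [hli, hlj]

lemma comb_smul_e {n : ℕ} (σ₁ σ₂ : ℤ) {i j : Fin n} (hij : i ≠ j)
    (hσ₂ : σ₂ = 1 ∨ σ₂ = -1) :
    σ₁ * (σ₂ • e n j) i + σ₂ * (σ₂ • e n j) j = 1 := by
  have h1 : (σ₂ • e n j) i = σ₂ * e n j i := rfl
  have h2 : (σ₂ • e n j) j = σ₂ * e n j j := rfl
  rw [h1, h2, e_self, e_ne n hij]
  rcases hσ₂ with h | h <;> subst h <;> ring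

def Dd {n : ℕ} (w : (Fin n → ℤ) → (Fin n → ℤ) → ℝ) (x : Fin n → ℤ) (l : Fin n) : ℝ :=
  w x (x + e n l) - w x (x - e n l)

lemma key {n : ℕ} {V : Type} (W : WGraph V) (Wg : GridWeight n)
    (K : Set V) (r : ℕ) (Φ : V → (Fin n → ℤ))
    (hbij : Set.BijOn Φ Kᶜ {x | r < nInf x})
    (hiff : ∀ u v, u ∉ K → v ∉ K → (W.G.Adj u v ↔ (grid n).Adj (Φ u) (Φ v)))
    (hw : ∀ u v, u ∉ K → v ∉ K → W.G.Adj u v → W.w u v = Wg.w (Φ u) (Φ v))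
    (hnoe : ∀ u v, u ∈ K → v ∉ K → r + 1 < nInf (Φ v) → ¬ W.G.Adj u v)
    (hric : ∀ u v, W.G.Adj u v → 0 ≤ kappa W.G W.w u v)
    {i j : Fin n} (hij : i ≠ j) {σ₁ σ₂ : ℤ}
    (hσ₁ : σ₁ = 1 ∨ σ₁ = -1) (hσ₂ : σ₂ = 1 ∨ σ₂ = -1)
    {x : Fin n → ℤ} (hx : r + 9 ≤ nInf x) :
    (σ₁:ℝ) * Dd Wg.w (x + σ₂ • e n j) i + (σ₂:ℝ) * Dd Wg.w (x + σ₂ • e n j) j ≤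
    (σ₁:ℝ) * Dd Wg.w x i + (σ₂:ℝ) * Dd Wg.w x j := by
  classical
  set y : Fin n → ℤ := x + σ₂ • e n j with hy
  set f : (Fin n → ℤ) → ℤ := tf r σ₁ σ₂ i j x with hf
  have hadjxy : (grid n).Adj x y := by
    rcases hσ₂ with h | h <;> rw [hy, h]
    · rw [one_smul_e]; exact adj_plus n x j
    · rw [neg_one_smul_e]; exact adj_minus n x j
  have hny : r + 8 ≤ nInf y := by
    have := adj_nInf_ge hadjxy
    omega
  -- nInf bounds for neighbors
  have hnbx : ∀ l : Fin n, r + 8 ≤ nInf (x + e n l) ∧ r + 8 ≤ nInf (x - e n l) := by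
    intro l
    constructor
    · have := adj_nInf_ge (adj_plus n x l)
      omega
    · have := adj_nInf_ge (adj_minus n x l)
      omega
  have hnby : ∀ l : Fin n, r + 7 ≤ nInf (y + e n l) ∧ r + 7 ≤ nInf (y - e n l) := by
    intro l
    constructor
    · have := adj_nInf_ge (adj_plus n y l)
      omega
    · have := adj_nInf_ge (adj_minus n y l)
      omega
  -- Ff values
  have hσb : σ₁ = 1 ∨ σ₁ = -1 := hσ₁
  have hcomb : ∀ l, σ₁ * e n l i + σ₂ * e n l j =
      if l = i then σ₁ else if l = j then σ₂ else 0 := comb_e σ₁ σ₂ hij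
  have hji : ¬ ((j : Fin n) = i) := fun hc => hij hc.symm
  have hFy : Ff σ₁ σ₂ i j x y = 1 := by
    rw [hy, Ff_step_add, Ff_self, comb_smul_e σ₁ σ₂ hij hσ₂]
    norm_num
  have hcombb : ∀ l, -1 ≤ (if l = i then σ₁ else if l = j then σ₂ else 0) ∧
      (if l = i then σ₁ else if l = j then σ₂ else 0) ≤ 1 := by
    intro l
    rcases hσ₁ with h1 | h1 <;> rcases hσ₂ with h2 | h2 <;>
      by_cases hli : l = i <;> by_cases hlj : l = j <;>
      simp [hli, hlj, h1, h2, hji]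
  -- f values as Ff
  have hfx : f x = 0 := by
    rw [hf, tf_eq (by omega) (by rw [Ff_self]; norm_num) (by rw [Ff_self]; norm_num), Ff_self]
  have hfy : f y = 1 := by
    rw [hf, tf_eq (by omega) (by rw [hFy]; norm_num) (by rw [hFy]; norm_num), hFy]
  have hfxp : ∀ l, f (x + e n l) = (if l = i then σ₁ else if l = j then σ₂ else 0) := by
    intro l
    have hv : Ff σ₁ σ₂ i j x (x + e n l) = (if l = i then σ₁ else if l = j then σ₂ else 0) := by
      rw [Ff_step_add, Ff_self, hcomb l]; ring
    rw [hf, tf_eq (by have := (hnbx l).1; omega)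
      (by rw [hv]; have := (hcombb l).1; omega)
      (by rw [hv]; have := (hcombb l).2; omega), hv]
  have hfxm : ∀ l, f (x - e n l) = -(if l = i then σ₁ else if l = j then σ₂ else 0) := by
    intro l
    have hv : Ff σ₁ σ₂ i j x (x - e n l) = -(if l = i then σ₁ else if l = j then σ₂ else 0) := by
      rw [Ff_step_sub, Ff_self, hcomb l]; ring
    rw [hf, tf_eq (by have := (hnbx l).2; omega)
      (by rw [hv]; have := (hcombb l).2; omega)
      (by rw [hv]; have := (hcombb l).1; omega), hv]
  have hfyp : ∀ l, f (y + e n l) = 1 + (if l = i then σ₁ else if l = j then σ₂ else 0) := by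
    intro l
    have hv : Ff σ₁ σ₂ i j x (y + e n l) = 1 + (if l = i then σ₁ else if l = j then σ₂ else 0) := by
      rw [Ff_step_add, hFy, hcomb l]
    rw [hf, tf_eq (by have := (hnby l).1; omega)
      (by rw [hv]; have := (hcombb l).1; omega)
      (by rw [hv]; have := (hcombb l).2; omega), hv]
  have hfym : ∀ l, f (y - e n l) = 1 - (if l = i then σ₁ else if l = j then σ₂ else 0) := by
    intro l
    have hv : Ff σ₁ σ₂ i j x (y - e n l) = 1 - (if l = i then σ₁ else if l = j then σ₂ else 0) := by
      rw [Ff_step_sub, hFy, hcomb l]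
    rw [hf, tf_eq (by have := (hnby l).2; omega)
      (by rw [hv]; have := (hcombb l).2; omega)
      (by rw [hv]; have := (hcombb l).1; omega), hv]
  -- lap evaluations on the grid
  have hlapx : lap (grid n) Wg.w f x = (σ₁:ℝ) * Dd Wg.w x i + (σ₂:ℝ) * Dd Wg.w x j := by
    apply lap_eval Wg.w f x hij σ₁ σ₂
    · rw [hfxp i, hfx]; simp
    · rw [hfxm i, hfx]; simp
    · rw [hfxp j, hfx]; simp [hji]
    · rw [hfxm j, hfx]; simp [hji]
    · intro l hli hlj
      rw [hfxp l, hfxm l, hfx]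
      simp [hli, hlj]
  have hlapy : lap (grid n) Wg.w f y = (σ₁:ℝ) * Dd Wg.w y i + (σ₂:ℝ) * Dd Wg.w y j := by
    apply lap_eval Wg.w f y hij σ₁ σ₂
    · rw [hfyp i, hfy]; simp
    · rw [hfym i, hfy]; simp
    · rw [hfyp j, hfy]; simp [hji]
    · rw [hfym j, hfy]; simp [hji]
    · intro l hli hlj
      rw [hfyp l, hfym l, hfy]
      simp [hli, hlj]
  -- pull back to V
  obtain ⟨vx, hvxK, hΦx⟩ := hbij.surjOn (show x ∈ {z | r < nInf z} by simp; omega)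
  obtain ⟨vy, hvyK, hΦy⟩ := hbij.surjOn (show y ∈ {z | r < nInf z} by simp; omega)
  have hWadj : W.G.Adj vx vy :=
    (hiff vx vy hvxK hvyK).mpr (by rw [hΦx, hΦy]; exact hadjxy)
  set g : V → ℤ := fun v => if v ∈ K then (-2) else f (Φ v) with hg
  have hgoff : ∀ v, v ∉ K → g v = f (Φ v) := by
    intro v hv; simp [hg, hv]
  have hedge : ∀ u v, W.G.Adj u v → |g u - g v| ≤ 1 := by
    have hKside : ∀ u v, W.G.Adj u v → u ∈ K → v ∉ K → g v = -2 := by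
      intro u v huv hu hv
      have hle : nInf (Φ v) ≤ r + 1 := by
        by_contra hc
        exact hnoe u v hu hv (by omega) huv
      rw [hgoff v hv, hf, tf_low hle]
    intro u v huv
    by_cases hu : u ∈ K <;> by_cases hv : v ∈ K
    · simp [hg, hu, hv]
    · rw [hKside u v huv hu hv]
      simp [hg, hu]
    · rw [hKside v u huv.symm hv hu]
      simp [hg, hv]
    · rw [hgoff u hu, hgoff v hv, hf]
      exact tf_edge_lip hσ₁ hσ₂ hij ((hiff u v hu hv).mp huv)
  have hlip : Lip1 W.G g := lip1_of_edge W.conn hedge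
  have hstep : g vy = g vx + 1 := by
    rw [hgoff vy hvyK, hgoff vx hvxK, hΦx, hΦy, hfx, hfy]
    omega
  have hk := hric vx vy hWadj
  have hkle := kappa_le W g hlip hstep
  have htx : lap W.G W.w g vx = lap (grid n) Wg.w f x := by
    have := lap_transfer W Wg K r Φ hbij hiff hw hnoe f g hgoff hvxK (by rw [hΦx]; omega)
    rwa [hΦx] at this
  have hty : lap W.G W.w g vy = lap (grid n) Wg.w f y := by
    have := lap_transfer W Wg K r Φ hbij hiff hw hnoe f g hgoff hvyK (by rw [hΦy]; omega)
    rwa [hΦy] at this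
  have hfinal : 0 ≤ lap (grid n) Wg.w f x - lap (grid n) Wg.w f y := by
    rw [← htx, ← hty]
    linarith [hkle, hk]
  rw [hlapx, hlapy] at hfinal
  linarith

lemma abs_close_one {a : ℝ} (h : ∀ ε : ℝ, 0 < ε → |a - 1| ≤ ε) : a = 1 := by
  by_contra hc
  have h1 : 0 < |a - 1| := abs_pos.mpr (sub_ne_zero.mpr hc)
  have := h (|a - 1| / 2) (by linarith)
  linarith

lemma ray_bound {n : ℕ} {V : Type} (W : WGraph V) (Wg : GridWeight n)
    (K : Set V) (r : ℕ) (Φ : V → (Fin n → ℤ))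
    (hbij : Set.BijOn Φ Kᶜ {x | r < nInf x})
    (hiff : ∀ u v, u ∉ K → v ∉ K → (W.G.Adj u v ↔ (grid n).Adj (Φ u) (Φ v)))
    (hw : ∀ u v, u ∉ K → v ∉ K → W.G.Adj u v → W.w u v = Wg.w (Φ u) (Φ v))
    (hnoe : ∀ u v, u ∈ K → v ∉ K → r + 1 < nInf (Φ v) → ¬ W.G.Adj u v)
    (hric : ∀ u v, W.G.Adj u v → 0 ≤ kappa W.G W.w u v)
    (hflat : ∀ ε : ℝ, 0 < ε → ∃ M : ℕ, ∀ x y, (grid n).Adj x y → M ≤ nInf x →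
      |Wg.w x y - 1| ≤ ε)
    {i j : Fin n} (hij : i ≠ j) {σ₁ σ₂ : ℤ}
    (hσ₁ : σ₁ = 1 ∨ σ₁ = -1) (hσ₂ : σ₂ = 1 ∨ σ₂ = -1)
    {x : Fin n → ℤ} (hray : ∀ t : ℤ, r + 9 ≤ nInf (x + t • e n j)) :
    0 ≤ (σ₁:ℝ) * Dd Wg.w x i + (σ₂:ℝ) * Dd Wg.w x j := by
  set G : (Fin n → ℤ) → ℝ := fun z => (σ₁:ℝ) * Dd Wg.w z i + (σ₂:ℝ) * Dd Wg.w z j with hG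
  set u : ℕ → (Fin n → ℤ) := fun t => x + (σ₂ * (t:ℤ)) • e n j with hu
  have hu0 : u 0 = x := by
    simp only [hu, Nat.cast_zero, mul_zero, zero_smul, add_zero]
  have hunInf : ∀ t : ℕ, r + 9 ≤ nInf (u t) := fun t => hray (σ₂ * (t:ℤ))
  have hstep : ∀ t : ℕ, G (u (t+1)) ≤ G (u t) := by
    intro t
    have hk := key W Wg K r Φ hbij hiff hw hnoe hric hij hσ₁ hσ₂ (hunInf t)
    have heq : u t + σ₂ • e n j = u (t+1) := by
      simp only [hu]
      have h1 : σ₂ * ((t+1 : ℕ) : ℤ) = σ₂ * (t : ℤ) + σ₂ := by push_cast; ring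
      rw [h1, add_smul, add_assoc]
    rw [heq] at hk
    exact hk
  have hmono : ∀ t : ℕ, G (u t) ≤ G x := by
    intro t
    induction t with
    | zero => rw [hu0]
    | succ k ih => exact le_trans (hstep k) ih
  -- limit
  have hlim : ∀ ε : ℝ, 0 < ε → -(4*ε) ≤ G x := by
    intro ε hε
    obtain ⟨M, hM⟩ := hflat ε hε
    set t : ℕ := M + (x j).natAbs with ht
    have hnt : M ≤ nInf (u t) := by
      have h1 := nInf_ray_ge x j (σ₂ * (t:ℤ))
      have : M ≤ (x j + σ₂ * t).natAbs := by
        rcases hσ₂ with h | h <;> rw [h] <;> push_cast <;> omega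
      calc M ≤ (x j + σ₂ * t).natAbs := this
        _ ≤ nInf (u t) := h1
    have hDi : |Dd Wg.w (u t) i| ≤ 2 * ε := by
      have h1 := hM (u t) (u t + e n i) (adj_plus n (u t) i) hnt
      have h2 := hM (u t) (u t - e n i) (adj_minus n (u t) i) hnt
      unfold Dd
      rw [abs_le] at *
      constructor <;> linarith [h1.1, h1.2, h2.1, h2.2]
    have hDj : |Dd Wg.w (u t) j| ≤ 2 * ε := by
      have h1 := hM (u t) (u t + e n j) (adj_plus n (u t) j) hnt
      have h2 := hM (u t) (u t - e n j) (adj_minus n (u t) j) hnt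
      unfold Dd
      rw [abs_le] at *
      constructor <;> linarith [h1.1, h1.2, h2.1, h2.2]
    have hGb : -(4*ε) ≤ G (u t) := by
      rw [hG]
      simp only
      rw [abs_le] at hDi hDj
      rcases hσ₁ with h1 | h1 <;> rcases hσ₂ with h2 | h2 <;> rw [h1, h2] <;>
        push_cast <;> nlinarith [hDi.1, hDi.2, hDj.1, hDj.2]
    exact le_trans hGb (hmono t)
  by_contra hc
  push_neg at hc
  have := hlim (-(G x) / 8) (by linarith)
  linarith

lemma Dzero {n : ℕ} (hn : 2 ≤ n) {V : Type} (W : WGraph V) (Wg : GridWeight n)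
    (K : Set V) (r : ℕ) (Φ : V → (Fin n → ℤ))
    (hbij : Set.BijOn Φ Kᶜ {x | r < nInf x})
    (hiff : ∀ u v, u ∉ K → v ∉ K → (W.G.Adj u v ↔ (grid n).Adj (Φ u) (Φ v)))
    (hw : ∀ u v, u ∉ K → v ∉ K → W.G.Adj u v → W.w u v = Wg.w (Φ u) (Φ v))
    (hnoe : ∀ u v, u ∈ K → v ∉ K → r + 1 < nInf (Φ v) → ¬ W.G.Adj u v)
    (hric : ∀ u v, W.G.Adj u v → 0 ≤ kappa W.G W.w u v)
    (hflat : ∀ ε : ℝ, 0 < ε → ∃ M : ℕ, ∀ x y, (grid n).Adj x y → M ≤ nInf x →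
      |Wg.w x y - 1| ≤ ε)
    {x : Fin n → ℤ} (hx : r + 9 ≤ nInf x) (i : Fin n) :
    Dd Wg.w x i = 0 := by
  obtain ⟨m, -, hm⟩ := Finset.exists_mem_eq_sup (Finset.univ : Finset (Fin n))
    ⟨⟨0, by omega⟩, Finset.mem_univ _⟩ (fun l => (x l).natAbs)
  haveI : Nontrivial (Fin n) := Fin.nontrivial_iff_two_le.mpr hn
  obtain ⟨j, hjm⟩ := exists_ne m
  have hray : ∀ t : ℤ, r + 9 ≤ nInf (x + t • e n j) := by
    intro t
    have h1 := nInf_ray_other x t (Ne.symm hjm)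
    have h2 : nInf x = (x m).natAbs := hm
    omega
  have hfour : ∀ (σ₁ σ₂ : ℤ), (σ₁ = 1 ∨ σ₁ = -1) → (σ₂ = 1 ∨ σ₂ = -1) →
      ∀ i' : Fin n, i' ≠ j →
      0 ≤ (σ₁:ℝ) * Dd Wg.w x i' + (σ₂:ℝ) * Dd Wg.w x j := by
    intro σ₁ σ₂ h1 h2 i' hi'
    exact ray_bound W Wg K r Φ hbij hiff hw hnoe hric hflat hi' h1 h2 hray
  have hzero : ∀ i' : Fin n, i' ≠ j → Dd Wg.w x i' = 0 ∧ Dd Wg.w x j = 0 := by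
    intro i' hi'
    have ha := hfour 1 1 (Or.inl rfl) (Or.inl rfl) i' hi'
    have hb := hfour 1 (-1) (Or.inl rfl) (Or.inr rfl) i' hi'
    have hc := hfour (-1) 1 (Or.inr rfl) (Or.inl rfl) i' hi'
    have hd := hfour (-1) (-1) (Or.inr rfl) (Or.inr rfl) i' hi'
    push_cast at ha hb hc hd
    constructor <;> linarith
  by_cases hi : i = j
  · rw [hi]
    exact (hzero m (Ne.symm hjm)).2
  · exact (hzero i hi).1

lemma wOne {n : ℕ} (hn : 2 ≤ n) {V : Type} (W : WGraph V) (Wg : GridWeight n)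
    (K : Set V) (r : ℕ) (Φ : V → (Fin n → ℤ))
    (hbij : Set.BijOn Φ Kᶜ {x | r < nInf x})
    (hiff : ∀ u v, u ∉ K → v ∉ K → (W.G.Adj u v ↔ (grid n).Adj (Φ u) (Φ v)))
    (hw : ∀ u v, u ∉ K → v ∉ K → W.G.Adj u v → W.w u v = Wg.w (Φ u) (Φ v))
    (hnoe : ∀ u v, u ∈ K → v ∉ K → r + 1 < nInf (Φ v) → ¬ W.G.Adj u v)
    (hric : ∀ u v, W.G.Adj u v → 0 ≤ kappa W.G W.w u v)
    (hflat : ∀ ε : ℝ, 0 < ε → ∃ M : ℕ, ∀ x y, (grid n).Adj x y → M ≤ nInf x →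
      |Wg.w x y - 1| ≤ ε)
    {x : Fin n → ℤ} (hx : r + 9 ≤ nInf x) (i : Fin n) :
    Wg.w x (x + e n i) = 1 := by
  have hD : ∀ z : Fin n → ℤ, r + 9 ≤ nInf z → Wg.w z (z + e n i) = Wg.w z (z - e n i) := by
    intro z hz
    have := Dzero hn W Wg K r Φ hbij hiff hw hnoe hric hflat hz i
    unfold Dd at this
    linarith
  by_cases h0 : 0 ≤ x i
  · -- go in +i direction
    have hC : ∀ t : ℕ, Wg.w x (x + e n i) =
        Wg.w (x + (t:ℤ) • e n i) ((x + (t:ℤ) • e n i) + e n i) := by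
      intro t
      induction t with
      | zero => norm_num
      | succ k ih =>
        have hcast : ((k+1:ℕ):ℤ) = (k:ℤ)+1 := by push_cast; ring
        rw [hcast]
        set u : Fin n → ℤ := x + (k:ℤ) • e n i with hu
        set u' : Fin n → ℤ := x + ((k:ℤ)+1) • e n i with hu'
        have hid1 : u' = u + e n i := by
          simp only [hu, hu']
          module
        have hid2 : u' - e n i = u := by rw [hid1]; abel
        have hnu' : r + 9 ≤ nInf u' := by
          rw [hu']
          have := nInf_ray_mono x i (t := (k:ℤ)+1) (Or.inl ⟨h0, by omega⟩)
          omega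
        have hstep : Wg.w u (u + e n i) = Wg.w u' (u' + e n i) := by
          calc Wg.w u (u + e n i) = Wg.w u u' := by rw [hid1]
            _ = Wg.w u' u := Wg.symm _ _
            _ = Wg.w u' (u' - e n i) := by rw [hid2]
            _ = Wg.w u' (u' + e n i) := (hD u' hnu').symm
        rw [ih, hstep]
    apply abs_close_one
    intro ε hε
    obtain ⟨M, hM⟩ := hflat ε hε
    have h1 := nInf_ray_ge x i (M:ℤ)
    have hnt : M ≤ nInf (x + (M:ℤ) • e n i) := by omega
    have := hM _ _ (adj_plus n (x + (M:ℤ) • e n i) i) hnt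
    rw [← hC M] at this
    exact this
  · push_neg at h0
    have h0' : x i ≤ 0 := le_of_lt h0
    have hC : ∀ t : ℕ, Wg.w x (x + e n i) =
        Wg.w (x + (-(t:ℤ)) • e n i) ((x + (-(t:ℤ)) • e n i) + e n i) := by
      intro t
      induction t with
      | zero => norm_num
      | succ k ih =>
        have hcast : (-((k+1:ℕ):ℤ)) = -((k:ℤ)+1) := by push_cast; ring
        rw [hcast]
        set u : Fin n → ℤ := x + (-(k:ℤ)) • e n i with hu
        set u'' : Fin n → ℤ := x + (-((k:ℤ)+1)) • e n i with hu''
        have hid1 : u'' + e n i = u := by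
          simp only [hu, hu'']
          module
        have hid2 : u'' = u - e n i := by rw [← hid1]; abel
        have hnu : r + 9 ≤ nInf u := by
          rw [hu]
          have := nInf_ray_mono x i (t := -(k:ℤ)) (Or.inr ⟨h0', by omega⟩)
          omega
        have hstep : Wg.w u'' (u'' + e n i) = Wg.w u (u + e n i) := by
          calc Wg.w u'' (u'' + e n i) = Wg.w u'' u := by rw [hid1]
            _ = Wg.w u u'' := Wg.symm _ _
            _ = Wg.w u (u - e n i) := by rw [hid2]
            _ = Wg.w u (u + e n i) := (hD u hnu).symm
        rw [ih, ← hstep]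
    apply abs_close_one
    intro ε hε
    obtain ⟨M, hM⟩ := hflat ε hε
    have h1 := nInf_ray_ge x i (-(M:ℤ))
    have hnt : M ≤ nInf (x + (-(M:ℤ)) • e n i) := by omega
    have := hM _ _ (adj_plus n (x + (-(M:ℤ)) • e n i) i) hnt
    rw [← hC M] at this
    exact this

lemma nInf_ball_finite {n : ℕ} (N : ℕ) : {z : Fin n → ℤ | nInf z ≤ N}.Finite := by
  apply Set.Finite.subset (Set.finite_Icc (fun _ => -(N:ℤ)) (fun _ => (N:ℤ)))
  intro z hz
  simp only [Set.mem_setOf_eq] at hz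
  simp only [Set.mem_Icc, Pi.le_def]
  constructor <;> (intro i; have h := coord_le_nInf z i; omega)

theorem final {n : ℕ} (hn : 2 ≤ n) {V : Type} (W : WGraph V) (Wg : GridWeight n)
    (K : Set V) (r : ℕ) (Φ : V → (Fin n → ℤ))
    (hK : K.Finite)
    (hbij : Set.BijOn Φ Kᶜ {x | r < nInf x})
    (hiff : ∀ u v, u ∉ K → v ∉ K → (W.G.Adj u v ↔ (grid n).Adj (Φ u) (Φ v)))
    (hw : ∀ u v, u ∉ K → v ∉ K → W.G.Adj u v → W.w u v = Wg.w (Φ u) (Φ v))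
    (hnoe : ∀ u v, u ∈ K → v ∉ K → r + 1 < nInf (Φ v) → ¬ W.G.Adj u v)
    (hric : ∀ u v, W.G.Adj u v → 0 ≤ kappa W.G W.w u v)
    (hflat : ∀ ε : ℝ, 0 < ε → ∃ M : ℕ, ∀ x y, (grid n).Adj x y → M ≤ nInf x →
      |Wg.w x y - 1| ≤ ε) :
    ∃ Wfin : Set V, Wfin.Finite ∧
      ∀ u v, W.G.Adj u v → u ∉ Wfin → v ∉ Wfin → W.w u v = 1 := by
  classical
  set B : Set (Fin n → ℤ) := {z | nInf z ≤ r + 9} with hB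
  set A : Set V := Kᶜ ∩ Φ ⁻¹' B with hA
  have hAfin : A.Finite := by
    apply Set.Finite.of_finite_image (f := Φ)
    · apply Set.Finite.subset (nInf_ball_finite (n := n) (r + 9))
      rintro z ⟨v, ⟨-, hv2⟩, rfl⟩
      exact hv2
    · exact hbij.injOn.mono Set.inter_subset_left
  refine ⟨K ∪ A, hK.union hAfin, ?_⟩
  intro u v huv hu hv
  have huK : u ∉ K := fun h => hu (Or.inl h)
  have hvK : v ∉ K := fun h => hv (Or.inl h)
  have huN : r + 9 < nInf (Φ u) := by
    by_contra hc
    exact hu (Or.inr ⟨huK, by simpa [hB] using Nat.le_of_not_lt hc⟩)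
  have hvN : r + 9 < nInf (Φ v) := by
    by_contra hc
    exact hv (Or.inr ⟨hvK, by simpa [hB] using Nat.le_of_not_lt hc⟩)
  have gadj : (grid n).Adj (Φ u) (Φ v) := (hiff u v huK hvK).mp huv
  rw [hw u v huK hvK huv]
  obtain ⟨l, hl | hl⟩ := adj_char gadj
  · rw [hl]
    exact wOne hn W Wg K r Φ hbij hiff hw hnoe hric hflat (by omega) l
  · have hl' : Φ u = Φ v + e n l := by rw [hl]; abel
    rw [Wg.symm, hl']
    exact wOne hn W Wg K r Φ hbij hiff hw hnoe hric hflat (by omega) l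


/-- for an asymptotically flat graph with nonnegative Ricci curvature,
the edge weights are trivial outside a finite set. -/
theorem ricci_trivial_weights (n : ℕ) (hn : 2 ≤ n) (V : Type) (W : WGraph V)
    (Wg : GridWeight n) (h : AsympFlatPair n W Wg)
    (hric : ∀ u v, W.G.Adj u v → 0 ≤ kappa W.G W.w u v) :
    ∃ Wfin : Set V, Wfin.Finite ∧
      ∀ u v, W.G.Adj u v → u ∉ Wfin → v ∉ Wfin → W.w u v = 1 := by
  obtain ⟨hgrid, K, r, Φ, hK, hr, hbij, hiff, hw', hnoe⟩ := h
  obtain ⟨p, hp, hflat, -, -⟩ := hgrid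
  exact final hn W Wg K r Φ hK hbij hiff hw' hnoe hric hflat

end PMT
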